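/- arXiv:1802.03877 — 3 statements merged into one kernel-verified Lean document; each statement's English description precedes it below -/
import Mathlib

section
/- For every real number z and every real number a > −4, 1/Φ(z) < √(2π(a+4)) · exp( (a+5)/(2(a+4)) · z² − a/(2(a+4)) ), where Φ is the cumulative distribution function of the standard normal distribution. -/
open MeasureTheory Real

/-- The standard normal cumulative distribution function. -/
noncomputable def stdNormalCDF (z : ℝ) : ℝ :=
  (Real.sqrt (2 * Real.pi))⁻¹ * ∫ t in Set.Iic z, Real.exp (-(t ^ 2) / 2)

open Set Filter


noncomputable def sfun (t : ℝ) : ℝ := Real.sqrt (t ^ 2 + 4)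

lemma sfun_sq (t : ℝ) : sfun t ^ 2 = t ^ 2 + 4 := Real.sq_sqrt (by positivity)

lemma sfun_ge_two (t : ℝ) : 2 ≤ sfun t := by
  rw [show (2:ℝ) = Real.sqrt 4 by rw [show (4:ℝ) = 2^2 by norm_num, Real.sqrt_sq (by norm_num)]]
  exact Real.sqrt_le_sqrt (by nlinarith [sq_nonneg t])

lemma sfun_pos (t : ℝ) : 0 < sfun t := lt_of_lt_of_le (by norm_num) (sfun_ge_two t)

lemma abs_lt_sfun (t : ℝ) : |t| < sfun t := by
  have h := sfun_sq t
  have h2 := sfun_pos t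
  nlinarith [abs_nonneg t, sq_abs t]

lemma add_sfun_pos (t : ℝ) : 0 < t + sfun t := by
  have := abs_lt_sfun t
  have := neg_abs_le t
  linarith

lemma sfun_le (t : ℝ) : sfun t ≤ |t| + 2 := by
  have h : sfun t = Real.sqrt (t ^ 2 + 4) := rfl
  rw [h, show t ^ 2 + 4 = |t|^2 + 4 by rw [sq_abs]]
  have : |t|^2 + 4 ≤ (|t| + 2)^2 := by nlinarith [abs_nonneg t]
  calc Real.sqrt (|t|^2+4) ≤ Real.sqrt ((|t|+2)^2) := Real.sqrt_le_sqrt this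
    _ = |t| + 2 := Real.sqrt_sq (by positivity)

lemma hasDerivAt_sfun (t : ℝ) : HasDerivAt sfun (t / sfun t) t := by
  have h1 : HasDerivAt (fun t : ℝ => t ^ 2 + 4) (2 * t) t := by
    simpa using (hasDerivAt_pow 2 t).add_const 4
  have h2 := (Real.hasDerivAt_sqrt (x := t ^ 2 + 4) (by positivity)).comp t h1
  refine h2.congr_deriv ?_
  unfold sfun
  field_simp

noncomputable def Gfun (t : ℝ) : ℝ := Real.exp (-(t ^ 2) / 2) * ((t + sfun t) / 2)

noncomputable def Dfun (t : ℝ) : ℝ :=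
  Real.exp (-(t ^ 2) / 2) * ((1 + t / sfun t) / 2 - t * ((t + sfun t) / 2))

lemma hasDerivAt_exp_part (t : ℝ) :
    HasDerivAt (fun t : ℝ => Real.exp (-(t ^ 2) / 2)) (Real.exp (-(t ^ 2) / 2) * (-t)) t := by
  have h1 : HasDerivAt (fun t : ℝ => -(t ^ 2) / 2) (-t) t := by
    have := ((hasDerivAt_pow 2 t).neg).div_const 2
    refine this.congr_deriv ?_
    ring
  simpa [mul_comm] using h1.exp

lemma hasDerivAt_Gfun (t : ℝ) : HasDerivAt Gfun (Dfun t) t := by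
  have h2 : HasDerivAt (fun t : ℝ => (t + sfun t) / 2) ((1 + t / sfun t) / 2) t :=
    ((hasDerivAt_id t).add (hasDerivAt_sfun t)).div_const 2
  have := (hasDerivAt_exp_part t).mul h2
  refine this.congr_deriv ?_
  unfold Dfun
  ring

lemma exp_sub_Dfun (t : ℝ) :
    Real.exp (-(t ^ 2) / 2) - Dfun t
      = Real.exp (-(t ^ 2) / 2) * (1 / 2 + t ^ 2 / 2 + t * (t ^ 2 + 3) / (2 * sfun t)) := by
  unfold Dfun
  have hs := (sfun_pos t).ne'
  have hsq := sfun_sq t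
  have key : (1:ℝ) - ((1 + t / sfun t) / 2 - t * ((t + sfun t) / 2))
      = 1 / 2 + t ^ 2 / 2 + t * (t ^ 2 + 3) / (2 * sfun t) := by
    field_simp
    linear_combination t * hsq
  calc Real.exp (-(t ^ 2) / 2) - Dfun t
      = Real.exp (-(t ^ 2) / 2) * ((1:ℝ) - ((1 + t / sfun t) / 2 - t * ((t + sfun t) / 2))) := by
        unfold Dfun; ring
    _ = _ := by rw [key]

lemma p_pos (t : ℝ) : 0 < 1 / 2 + t ^ 2 / 2 + t * (t ^ 2 + 3) / (2 * sfun t) := by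
  have hs := sfun_pos t
  have hsq := sfun_sq t
  rcases le_or_gt 0 t with h | h
  · positivity
  · have ha : 0 < (1 + t ^ 2) * sfun t := by positivity
    have hb : 0 < -t * (t ^ 2 + 3) := by nlinarith [sq_nonneg t]
    have hsq2 : (-t * (t ^ 2 + 3)) ^ 2 < ((1 + t ^ 2) * sfun t) ^ 2 := by nlinarith [hsq]
    have hnum : -t * (t ^ 2 + 3) < (1 + t ^ 2) * sfun t :=
      lt_of_pow_lt_pow_left₀ 2 ha.le hsq2
    have hfin : -(1 / 2 + t ^ 2 / 2) < t * (t ^ 2 + 3) / (2 * sfun t) := by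
      rw [neg_lt, ← neg_div, div_lt_iff₀ (by positivity)]
      nlinarith [hnum]
    linarith

lemma continuous_sfun : Continuous sfun :=
  Real.continuous_sqrt.comp (by continuity)

lemma continuous_Dfun : Continuous Dfun := by
  unfold Dfun
  apply Continuous.mul
  · exact Real.continuous_exp.comp (by continuity)
  · apply Continuous.sub
    · apply Continuous.div_const
      exact continuous_const.add (continuous_id.div continuous_sfun fun t => (sfun_pos t).ne')
    · exact continuous_id.mul ((continuous_id.add continuous_sfun).div_const 2)

lemma integrable_gauss : Integrable (fun t : ℝ => Real.exp (-(t ^ 2) / 2)) := by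
  have := integrable_exp_neg_mul_sq (b := (1/2 : ℝ)) (by norm_num)
  convert this using 2 with t
  ring_nf

lemma Dfun_bound (t : ℝ) : ‖Dfun t‖ ≤ 10 * Real.exp (-(1/4) * t ^ 2) := by
  have hs := sfun_pos t
  have hs2 := sfun_ge_two t
  have hsle := sfun_le t
  have hdiv : |t / sfun t| ≤ |t| / 2 := by
    rw [abs_div, abs_of_pos hs]
    exact div_le_div_of_nonneg_left (abs_nonneg t) (by norm_num) hs2
  have hts : |t * sfun t| ≤ |t| * (|t| + 2) := by
    rw [abs_mul, abs_of_pos hs]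
    exact mul_le_mul_of_nonneg_left hsle (abs_nonneg t)
  have hq : |(1 + t / sfun t) / 2 - t * ((t + sfun t) / 2)| ≤ 1 + 2 * |t| + t ^ 2 := by
    obtain ⟨hd1, hd2⟩ := abs_le.mp hdiv
    obtain ⟨ht1, ht2⟩ := abs_le.mp hts
    rw [abs_le]
    constructor <;> nlinarith [neg_abs_le t, le_abs_self t, abs_nonneg t, sq_abs t]
  calc ‖Dfun t‖ = Real.exp (-(t ^ 2) / 2) * |(1 + t / sfun t) / 2 - t * ((t + sfun t) / 2)| := by
        rw [Real.norm_eq_abs]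
        unfold Dfun
        rw [abs_mul, abs_of_pos (Real.exp_pos _)]
    _ ≤ Real.exp (-(t ^ 2) / 2) * (1 + 2 * |t| + t ^ 2) := by
        exact mul_le_mul_of_nonneg_left hq (Real.exp_pos _).le
    _ ≤ 10 * Real.exp (-(1/4) * t ^ 2) := by
        rw [show -(t ^ 2) / 2 = (-(1/4) * t ^ 2) + (-(1/4) * t ^ 2) by ring, Real.exp_add]
        have key : Real.exp (-(1/4) * t ^ 2) * (1 + 2 * |t| + t ^ 2) ≤ 10 := by
          rw [show -(1/4 : ℝ) * t ^ 2 = -((1/4) * t ^ 2) by ring, Real.exp_neg,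
            inv_mul_le_iff₀ (Real.exp_pos _)]
          have h := Real.add_one_le_exp ((1/4) * t ^ 2)
          nlinarith [sq_abs t, sq_nonneg (|t| - 1), abs_nonneg t]
        calc Real.exp (-(1/4) * t ^ 2) * Real.exp (-(1/4) * t ^ 2) * (1 + 2 * |t| + t ^ 2)
            = Real.exp (-(1/4) * t ^ 2) * (Real.exp (-(1/4) * t ^ 2) * (1 + 2 * |t| + t ^ 2)) := by
              ring
          _ ≤ Real.exp (-(1/4) * t ^ 2) * 10 :=
              mul_le_mul_of_nonneg_left key (Real.exp_pos _).le
          _ = 10 * Real.exp (-(1/4) * t ^ 2) := by ring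

lemma integrable_Dfun : Integrable Dfun := by
  have h1 : Integrable (fun t : ℝ => 10 * Real.exp (-(1/4) * t ^ 2)) :=
    (integrable_exp_neg_mul_sq (by norm_num)).const_mul 10
  exact h1.mono' continuous_Dfun.aestronglyMeasurable
    (Filter.Eventually.of_forall Dfun_bound)

lemma Gfun_pos (t : ℝ) : 0 < Gfun t := by
  unfold Gfun
  have := add_sfun_pos t
  positivity

lemma tendsto_Gfun_atBot : Tendsto Gfun atBot (nhds 0) := by
  have hexp : Tendsto (fun t : ℝ => Real.exp (-(t ^ 2) / 2)) atBot (nhds 0) := by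
    apply Real.tendsto_exp_atBot.comp
    apply tendsto_atBot_mono (fun t : ℝ => ?_) (tendsto_atBot_add_const_right atBot 1 tendsto_id)
    simp only [id_eq]
    nlinarith [sq_nonneg (t + 1)]
  apply squeeze_zero' (Filter.Eventually.of_forall fun t => (Gfun_pos t).le) ?_ hexp
  filter_upwards [Filter.eventually_le_atBot (0 : ℝ)] with t ht
  unfold Gfun
  have hsle := sfun_le t
  rw [abs_of_nonpos ht] at hsle
  have h1 : (t + sfun t) / 2 ≤ 1 := by linarith
  nlinarith [Real.exp_pos (-(t ^ 2) / 2), Gfun_pos t]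

lemma keyA (z : ℝ) :
    Real.exp (-(z ^ 2) / 2) * ((z + sfun z) / 2) < ∫ t in Set.Iic z, Real.exp (-(t ^ 2) / 2) := by
  have hFTC : ∫ t in Set.Iic z, Dfun t = Gfun z - 0 :=
    integral_Iic_of_hasDerivAt_of_tendsto' (fun x _ => hasDerivAt_Gfun x)
      integrable_Dfun.integrableOn tendsto_Gfun_atBot
  have hIexp : IntegrableOn (fun t : ℝ => Real.exp (-(t ^ 2) / 2)) (Set.Iic z) :=
    integrable_gauss.integrableOn
  have hpos : 0 < ∫ t in Set.Iic z, (Real.exp (-(t ^ 2) / 2) - Dfun t) := by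
    rw [setIntegral_pos_iff_support_of_nonneg_ae]
    · have hsupp : Function.support (fun t : ℝ => Real.exp (-(t ^ 2) / 2) - Dfun t) = Set.univ := by
        ext t
        simp only [Function.mem_support, Set.mem_univ, iff_true]
        rw [exp_sub_Dfun]
        exact (mul_pos (Real.exp_pos _) (p_pos t)).ne'
      rw [hsupp, Set.univ_inter, Real.volume_Iic]
      norm_num
    · filter_upwards with t
      rw [exp_sub_Dfun]
      exact (mul_pos (Real.exp_pos _) (p_pos t)).le
    · exact hIexp.sub integrable_Dfun.integrableOn
  rw [integral_sub hIexp integrable_Dfun.integrableOn, hFTC] at hpos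
  unfold Gfun at hpos
  linarith

lemma keyB {b c : ℝ} (hb : 0 < b) (hc : 0 < c) :
    Real.sqrt c ≤ Real.sqrt b * Real.exp (c / (2 * b) - 1 / 2) := by
  have h1 : c / b ≤ Real.exp (c / b - 1) := by
    have := Real.add_one_le_exp (c / b - 1)
    linarith
  have h2 : c ≤ b * Real.exp (c / b - 1) := by
    rw [div_le_iff₀ hb] at h1
    linarith [h1]
  calc Real.sqrt c ≤ Real.sqrt (b * Real.exp (c / b - 1)) := Real.sqrt_le_sqrt h2
    _ = Real.sqrt b * Real.sqrt (Real.exp (c / b - 1)) := Real.sqrt_mul hb.le _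
    _ = Real.sqrt b * Real.exp (c / (2 * b) - 1 / 2) := by
        congr 1
        rw [show Real.exp (c / b - 1) = Real.exp (c / (2 * b) - 1 / 2) ^ 2 by
          rw [← Real.exp_nat_mul]; congr 1; field_simp; ring]
        exact Real.sqrt_sq (Real.exp_pos _).le

/-- For every real `z` and every `a > -4`,
`1/Φ(z) < √(2π(a+4)) · exp((a+5)/(2(a+4)) · z² − a/(2(a+4)))`. -/
theorem stmt_3 (z a : ℝ) (ha : -4 < a) :
    1 / stdNormalCDF z <
      Real.sqrt (2 * Real.pi * (a + 4)) *
        Real.exp ((a + 5) / (2 * (a + 4)) * z ^ 2 - a / (2 * (a + 4))) := by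
  set b := a + 4 with hbdef
  have hb : 0 < b := by simp [hbdef]; linarith
  have hπ : (0:ℝ) < 2 * Real.pi := by positivity
  have h2π : 0 < Real.sqrt (2 * Real.pi) := Real.sqrt_pos.mpr hπ
  set s := sfun z with hsdef
  have hs := sfun_pos z
  have hzs : 0 < z + s := add_sfun_pos z
  have hssq : s ^ 2 = z ^ 2 + 4 := sfun_sq z
  have hnegz : -z < s := by
    have := abs_lt_sfun z
    have := neg_abs_le z
    linarith
  set L := (Real.sqrt (2 * Real.pi))⁻¹ * (Real.exp (-(z ^ 2) / 2) * ((z + s) / 2)) with hLdef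
  have hL : 0 < L := by
    apply mul_pos (by positivity)
    positivity
  have hΦ : L < stdNormalCDF z := by
    unfold stdNormalCDF
    exact mul_lt_mul_of_pos_left (keyA z) (by positivity)
  have step1 : 1 / stdNormalCDF z < 1 / L := one_div_lt_one_div_of_lt hL hΦ
  have hLeq : 1 / L = Real.sqrt (2 * Real.pi) * Real.exp (z ^ 2 / 2) * ((s - z) / 2) := by
    rw [hLdef]
    rw [show -(z ^ 2) / 2 = -(z ^ 2 / 2) by ring, Real.exp_neg]
    have h4 : (s - z) * (s + z) = 4 := by nlinarith
    field_simp
    linear_combination -hssq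
  have step2 : Real.sqrt (2 * Real.pi) * Real.exp (z ^ 2 / 2) * ((s - z) / 2) <
      Real.sqrt (2 * Real.pi * b) *
        Real.exp ((a + 5) / (2 * b) * z ^ 2 - a / (2 * b)) := by
    have hexp : (a + 5) / (2 * b) * z ^ 2 - a / (2 * b)
        = z ^ 2 / 2 + ((z ^ 2 + 4) / (2 * b) - 1 / 2) := by
      rw [hbdef]
      have hb4 : a + 4 ≠ 0 := by linarith
      field_simp
      ring
    rw [hexp, Real.exp_add, Real.sqrt_mul hπ.le]
    have hB : Real.sqrt (z ^ 2 + 4) ≤ Real.sqrt b * Real.exp ((z ^ 2 + 4) / (2 * b) - 1 / 2) :=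
      keyB hb (by positivity)
    have hlt : (s - z) / 2 < Real.sqrt b * Real.exp ((z ^ 2 + 4) / (2 * b) - 1 / 2) := by
      have hseq : s = Real.sqrt (z ^ 2 + 4) := rfl
      have : (s - z) / 2 < s := by linarith
      rw [hseq] at this
      linarith [hB]
    calc Real.sqrt (2 * Real.pi) * Real.exp (z ^ 2 / 2) * ((s - z) / 2)
        < Real.sqrt (2 * Real.pi) * Real.exp (z ^ 2 / 2) *
            (Real.sqrt b * Real.exp ((z ^ 2 + 4) / (2 * b) - 1 / 2)) := by
          apply mul_lt_mul_of_pos_left hlt (by positivity)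
      _ = Real.sqrt (2 * Real.pi) * Real.sqrt b *
            (Real.exp (z ^ 2 / 2) * Real.exp ((z ^ 2 + 4) / (2 * b) - 1 / 2)) := by ring
  exact step1.trans (hLeq ▸ step2)
end

section
/- (Komatu's inequality, used in the paper.) For every real number z ≤ 0, Φ(z) > 2·φ(z) / ( √(z²+4) − z ), where Φ is the standard normal CDF and φ(z) = (1/√(2π))·exp(−z²/2) is the standard normal density. -/
open MeasureTheory Real

/-- The standard normal probability density function. -/
noncomputable def stdNormalPDF (z : ℝ) : ℝ :=
  (Real.sqrt (2 * Real.pi))⁻¹ * Real.exp (-(z ^ 2) / 2)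

namespace Komatu

open Filter Set

noncomputable def g (t : ℝ) : ℝ := Real.exp (-(t ^ 2) / 2)

noncomputable def s (x : ℝ) : ℝ := Real.sqrt (x ^ 2 + 4)

noncomputable def G (z : ℝ) : ℝ := ∫ t in Set.Iic z, g t

noncomputable def h (z : ℝ) : ℝ := 2 * g z / (s z - z)

noncomputable def F (z : ℝ) : ℝ := G z - h z

lemma g_pos (t : ℝ) : 0 < g t := Real.exp_pos _

lemma g_cont : Continuous g := by
  unfold g; fun_prop

lemma g_int : Integrable g := by
  have h1 := integrable_exp_neg_mul_sq (show (0:ℝ) < 1/2 by norm_num)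
  have h2 : g = fun t : ℝ => Real.exp (-(1/2 : ℝ) * t ^ 2) := by
    funext t; unfold g; ring_nf
  rw [h2]; exact h1

lemma s_sq (x : ℝ) : s x ^ 2 = x ^ 2 + 4 :=
  Real.sq_sqrt (by positivity)

lemma s_nonneg (x : ℝ) : 0 ≤ s x := Real.sqrt_nonneg _

lemma s_gt (x : ℝ) : x < s x := by
  nlinarith [s_sq x, s_nonneg x]

lemma s_gt' (x : ℝ) : -x < s x := by
  nlinarith [s_sq x, s_nonneg x]

lemma s_pos (x : ℝ) : 0 < s x := by nlinarith [s_gt x, s_gt' x]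

lemma hasDerivAt_G (x : ℝ) : HasDerivAt G (g x) x := by
  have key : ∀ z : ℝ, G z = G 0 + ∫ t in (0:ℝ)..z, g t := by
    intro z
    rw [← intervalIntegral.integral_Iic_sub_Iic g_int.integrableOn g_int.integrableOn]
    unfold G; ring
  have hd : HasDerivAt (fun z => G 0 + ∫ t in (0:ℝ)..z, g t) (g x) x := by
    refine (intervalIntegral.integral_hasDerivAt_right g_int.intervalIntegrable
      (g_cont.stronglyMeasurableAtFilter _ _) g_cont.continuousAt).const_add _
  exact hd.congr_of_eventuallyEq (Filter.Eventually.of_forall key)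

lemma hasDerivAt_s (x : ℝ) : HasDerivAt s (2 * x / (2 * s x)) x := by
  have h1 : HasDerivAt (fun y : ℝ => y ^ 2 + 4) (2 * x) x := by
    simpa using ((hasDerivAt_pow 2 x).add_const 4)
  exact (h1.sqrt (by positivity))

lemma hasDerivAt_g (x : ℝ) : HasDerivAt g (g x * (-(2 * x) / 2)) x := by
  have h1 : HasDerivAt (fun y : ℝ => -(y ^ 2) / 2) (-(2 * x) / 2) x := by
    simpa using ((hasDerivAt_pow 2 x).neg.div_const 2)
  exact h1.exp

lemma hasDerivAt_h (x : ℝ) :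
    HasDerivAt h ((2 * (g x * (-(2 * x) / 2)) * (s x - x)
      - 2 * g x * (2 * x / (2 * s x) - 1)) / (s x - x) ^ 2) x := by
  have hnum : HasDerivAt (fun z => 2 * g z) (2 * (g x * (-(2 * x) / 2))) x :=
    (hasDerivAt_g x).const_mul 2
  have hden : HasDerivAt (fun z => s z - z) (2 * x / (2 * s x) - 1) x :=
    (hasDerivAt_s x).sub (hasDerivAt_id x)
  have hne : s x - x ≠ 0 := by have := s_gt x; linarith
  exact hnum.div hden hne

lemma hasDerivAt_F (x : ℝ) :
    HasDerivAt F (g x - ((2 * (g x * (-(2 * x) / 2)) * (s x - x)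
      - 2 * g x * (2 * x / (2 * s x) - 1)) / (s x - x) ^ 2)) x :=
  (hasDerivAt_G x).sub (hasDerivAt_h x)

lemma derivF_pos (x : ℝ) :
    0 < g x - ((2 * (g x * (-(2 * x) / 2)) * (s x - x)
      - 2 * g x * (2 * x / (2 * s x) - 1)) / (s x - x) ^ 2) := by
  have hs := s_sq x
  have hsp := s_pos x
  have hgx := s_gt x
  have hgx' := s_gt' x
  have hgp := g_pos x
  have hd : (0:ℝ) < s x - x := by linarith
  have key : g x - ((2 * (g x * (-(2 * x) / 2)) * (s x - x)
      - 2 * g x * (2 * x / (2 * s x) - 1)) / (s x - x) ^ 2)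
      = 2 * g x * (s x + x) / (s x * (s x - x) ^ 2) := by
    have hdne : s x - x ≠ 0 := ne_of_gt hd
    field_simp
    linear_combination (s x) * hs
  rw [key]
  have hsx : (0:ℝ) < s x + x := by linarith
  positivity

lemma F_strictMono : StrictMono F := by
  apply strictMono_of_deriv_pos
  intro x
  rw [(hasDerivAt_F x).deriv]
  exact derivF_pos x

lemma g_le_exp {w : ℝ} (hw : w ≤ -2) : ∀ t ∈ Iic w, g t ≤ Real.exp t := by
  intro t ht
  simp only [mem_Iic] at ht
  have ht2 : t ≤ -2 := le_trans ht hw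
  apply Real.exp_le_exp.2
  nlinarith

lemma tendsto_G : Tendsto G atBot (nhds 0) := by
  apply tendsto_of_tendsto_of_tendsto_of_le_of_le' tendsto_const_nhds Real.tendsto_exp_atBot
  · exact Filter.Eventually.of_forall fun w =>
      setIntegral_nonneg measurableSet_Iic fun t _ => (g_pos t).le
  · filter_upwards [eventually_le_atBot (-2 : ℝ)] with w hw
    calc G w ≤ ∫ t in Iic w, Real.exp t :=
          setIntegral_mono_on g_int.integrableOn (integrableOn_exp_Iic w)
            measurableSet_Iic (g_le_exp hw)
      _ = Real.exp w := integral_exp_Iic w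

lemma tendsto_h : Tendsto h atBot (nhds 0) := by
  apply tendsto_of_tendsto_of_tendsto_of_le_of_le' tendsto_const_nhds Real.tendsto_exp_atBot
  · refine Filter.Eventually.of_forall fun w => ?_
    have h1 := g_pos w
    have h2 := s_gt w
    have : (0:ℝ) < s w - w := by linarith
    exact le_of_lt (by unfold h; positivity)
  · filter_upwards [eventually_le_atBot (-2 : ℝ)] with w hw
    have hgw : g w ≤ Real.exp w := g_le_exp hw w (by simp)
    have hs2 : 2 ≤ s w := by
      have := s_sq w; have := s_nonneg w; nlinarith
    have hd : 2 ≤ s w - w := by linarith [hw]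
    have hgp := g_pos w
    calc h w ≤ 2 * g w / 2 := by
          apply div_le_div_of_nonneg_left (by positivity) (by norm_num) hd
      _ = g w := by ring
      _ ≤ Real.exp w := hgw

lemma tendsto_F : Tendsto F atBot (nhds 0) := by
  have := tendsto_G.sub tendsto_h
  simp only [sub_zero] at this
  exact this

lemma F_pos (z : ℝ) : 0 < F z := by
  have h1 : 0 ≤ F (z - 1) := by
    refine le_of_tendsto tendsto_F ?_
    filter_upwards [eventually_le_atBot (z - 1)] with t ht
    exact F_strictMono.monotone ht
  have h2 : F (z - 1) < F z := F_strictMono (by linarith)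
  linarith

end Komatu

/-- Komatu's inequality: for every `z ≤ 0`, `Φ(z) > 2·φ(z)/(√(z²+4) − z)`. -/
theorem stmt_4 (z : ℝ) (hz : z ≤ 0) :
    2 * stdNormalPDF z / (Real.sqrt (z ^ 2 + 4) - z) < stdNormalCDF z := by
  have hF := Komatu.F_pos z
  unfold Komatu.F Komatu.G Komatu.h Komatu.g Komatu.s at hF
  have hC : 0 < (Real.sqrt (2 * Real.pi))⁻¹ := by
    have : 0 < Real.pi := Real.pi_pos
    positivity
  have hd : 0 < Real.sqrt (z ^ 2 + 4) - z := by
    have := Komatu.s_gt z; unfold Komatu.s at this; linarith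
  have h2 : 2 * Real.exp (-(z ^ 2) / 2) / (Real.sqrt (z ^ 2 + 4) - z)
      < ∫ t in Set.Iic z, Real.exp (-(t ^ 2) / 2) := by linarith
  unfold stdNormalCDF stdNormalPDF
  calc 2 * ((Real.sqrt (2 * Real.pi))⁻¹ * Real.exp (-(z ^ 2) / 2)) / (Real.sqrt (z ^ 2 + 4) - z)
      = (Real.sqrt (2 * Real.pi))⁻¹
        * (2 * Real.exp (-(z ^ 2) / 2) / (Real.sqrt (z ^ 2 + 4) - z)) := by ring
    _ < (Real.sqrt (2 * Real.pi))⁻¹ * ∫ t in Set.Iic z, Real.exp (-(t ^ 2) / 2) :=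
        mul_lt_mul_of_pos_left h2 hC
end

section
/- Let z be a real-valued random variable on a probability space, let a > −4 be a real number, and let M ∈ ℝ be such that log E[ exp( (a+5)/(2(a+4)) · z² ) ] ≤ M (the expectation being finite). Then E[1/Φ(z)] is finite and log E[ 1/Φ(z) ] ≤ (1/2)·log(2π(a+4)) − a/(2(a+4)) + M, where Φ is the standard normal CDF. -/
open MeasureTheory Real

open Set Filter

lemma gauss_integrable : Integrable (fun t : ℝ => Real.exp (-(t^2)/2)) := by
  have h := integrable_exp_neg_mul_sq (b := (1/2 : ℝ)) (by norm_num)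
  convert h using 2 with t
  ring_nf

lemma gauss_total : (∫ t : ℝ, Real.exp (-(t^2)/2)) = Real.sqrt (2 * Real.pi) := by
  have h := integral_gaussian (1/2 : ℝ)
  have h2 : (∫ t : ℝ, Real.exp (-(t^2)/2)) = ∫ t : ℝ, Real.exp (-(1/2) * t^2) := by
    congr 1 with t; ring_nf
  rw [h2, h, show Real.pi / (1/2) = 2 * Real.pi by ring]

lemma gauss_Iic_zero : (∫ t in Iic (0:ℝ), Real.exp (-(t^2)/2)) = Real.sqrt (2 * Real.pi) / 2 := by
  have h := integral_comp_neg_Iic (0:ℝ) (fun t => Real.exp (-(t^2)/2))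
  simp only [neg_zero, neg_sq] at h
  rw [h]
  have h2 : (∫ t in Ioi (0:ℝ), Real.exp (-(t^2)/2)) = ∫ t in Ioi (0:ℝ), Real.exp (-(1/2) * t^2) := by
    congr 1 with t; ring_nf
  rw [h2, integral_gaussian_Ioi, show Real.pi / (1/2) = 2 * Real.pi by ring]

lemma gauss_Iic_eq_Ioi (z : ℝ) :
    (∫ t in Iic z, Real.exp (-(t^2)/2)) = ∫ t in Ioi (-z), Real.exp (-(t^2)/2) := by
  have h := integral_comp_neg_Iic z (fun t => Real.exp (-(t^2)/2))
  simp only [neg_sq] at h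
  exact h

lemma setIntegral_translate (f : ℝ → ℝ) (z : ℝ) (s : Set ℝ) :
    (∫ t in s, f t) = ∫ t in (fun x => x + z) ⁻¹' s, f (t + z) := by
  have A : MeasurableEmbedding fun x : ℝ => x + z :=
    (Homeomorph.addRight z).isClosedEmbedding.measurableEmbedding
  have := A.setIntegral_map (μ := volume) f s
  rw [map_add_right_eq_self (volume : Measure ℝ) z] at this
  exact this

lemma gauss_Iic_lower (z : ℝ) :
    Real.sqrt Real.pi / 2 * Real.exp (-z^2) ≤ ∫ t in Iic z, Real.exp (-(t^2)/2) := by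
  have hint2 : Integrable (fun t : ℝ => Real.exp (-z^2) * Real.exp (-((t-z)^2))) := by
    apply Integrable.const_mul
    have h := integrable_exp_neg_mul_sq (b := (1 : ℝ)) (by norm_num)
    have h2 := h.comp_sub_right z
    convert h2 using 2 with t
    ring_nf
  have key : (∫ t in Iic z, Real.exp (-z^2) * Real.exp (-((t-z)^2))) =
      Real.exp (-z^2) * (Real.sqrt Real.pi / 2) := by
    rw [integral_const_mul]
    congr 1
    have h1 : (∫ t in Iic z, Real.exp (-((t-z)^2))) = ∫ t in Iic 0, Real.exp (-(t^2)) := by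
      have h := setIntegral_translate (fun t => Real.exp (-((t-z)^2))) z (Iic z)
      simp only [add_sub_cancel_right] at h
      rw [h]
      have hpre : (fun x : ℝ => x + z) ⁻¹' (Iic z) = Iic 0 := by
        ext x; simp [Set.mem_preimage]
      rw [hpre]
    rw [h1]
    have h2 := integral_comp_neg_Iic (0:ℝ) (fun t => Real.exp (-(t^2)))
    simp only [neg_zero, neg_sq] at h2
    rw [h2]
    have h3 : (∫ t in Ioi (0:ℝ), Real.exp (-(t^2))) = ∫ t in Ioi (0:ℝ), Real.exp (-1 * t^2) := by
      congr 1 with t; ring_nf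
    rw [h3, integral_gaussian_Ioi]
    norm_num
  have hmono : (∫ t in Iic z, Real.exp (-z^2) * Real.exp (-((t-z)^2)))
      ≤ ∫ t in Iic z, Real.exp (-(t^2)/2) := by
    apply setIntegral_mono_on hint2.integrableOn gauss_integrable.integrableOn measurableSet_Iic
    intro t _
    rw [← Real.exp_add]
    apply Real.exp_le_exp.mpr
    nlinarith [sq_nonneg (t - 2*z)]
  calc Real.sqrt Real.pi / 2 * Real.exp (-z^2)
      = ∫ t in Iic z, Real.exp (-z^2) * Real.exp (-((t-z)^2)) := by rw [key]; ring
    _ ≤ _ := hmono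

lemma phi_pos (z : ℝ) : 0 < stdNormalCDF z := by
  have h := gauss_Iic_lower z
  have hπ := Real.pi_pos
  unfold stdNormalCDF
  have h0 : (0:ℝ) < Real.sqrt Real.pi / 2 * Real.exp (-z^2) := by positivity
  have : (0:ℝ) < ∫ t in Iic z, Real.exp (-(t^2)/2) := lt_of_lt_of_le h0 h
  positivity

lemma phi_le_one (z : ℝ) : stdNormalCDF z ≤ 1 := by
  unfold stdNormalCDF
  have hπ := Real.pi_pos
  have h : (∫ t in Iic z, Real.exp (-(t^2)/2)) ≤ ∫ t : ℝ, Real.exp (-(t^2)/2) := by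
    apply setIntegral_le_integral gauss_integrable
    filter_upwards with t
    positivity
  rw [gauss_total] at h
  have hs : (0:ℝ) < Real.sqrt (2 * Real.pi) := by positivity
  calc (Real.sqrt (2 * Real.pi))⁻¹ * ∫ t in Iic z, Real.exp (-(t^2)/2)
      ≤ (Real.sqrt (2 * Real.pi))⁻¹ * Real.sqrt (2 * Real.pi) := by
        apply mul_le_mul_of_nonneg_left h (by positivity)
    _ = 1 := inv_mul_cancel₀ (ne_of_gt hs)

lemma phi_monotone : Monotone stdNormalCDF := by
  intro x y hxy
  unfold stdNormalCDF
  apply mul_le_mul_of_nonneg_left _ (by positivity)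
  apply setIntegral_mono_set gauss_integrable.integrableOn
  · filter_upwards with t; positivity
  · exact HasSubset.Subset.eventuallyLE (Iic_subset_Iic.mpr hxy)
-- Mills ratio lower bound
lemma mills (x : ℝ) (hx : 0 ≤ x) :
    Real.exp (-(x^2)/2) * (x/(x^2+1)) ≤ ∫ t in Ioi x, Real.exp (-(t^2)/2) := by
  set f : ℝ → ℝ := fun t => -(Real.exp (-(t^2)/2) * (t/(t^2+1))) with hf
  set f' : ℝ → ℝ := fun t => Real.exp (-(t^2)/2) * ((t^4 + 2*t^2 - 1)/((t^2+1)^2)) with hf'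
  have hd : ∀ t : ℝ, HasDerivAt f (f' t) t := by
    intro t
    have ht : (t^2 + 1 : ℝ) ≠ 0 := by positivity
    have h1 : HasDerivAt (fun t : ℝ => -(t^2)/2) (-t) t := by
      have := ((hasDerivAt_pow 2 t).neg.div_const 2)
      refine this.congr_deriv ?_
      ring
    have h2 : HasDerivAt (fun t : ℝ => Real.exp (-(t^2)/2)) (Real.exp (-(t^2)/2) * (-t)) t :=
      h1.exp
    have h3 : HasDerivAt (fun t : ℝ => t/(t^2+1)) ((1*(t^2+1) - t*(2*t))/((t^2+1)^2)) t := by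
      exact (hasDerivAt_id t).div ((hasDerivAt_pow 2 t).add_const 1 |>.congr_deriv (by ring)) ht
    have h4 := (h2.mul h3).neg
    have hrat : t * (t/(t^2+1)) - (1*(t^2+1) - t*(2*t))/((t^2+1)^2)
        = (t^4+2*t^2-1)/((t^2+1)^2) := by
      field_simp
      ring
    have hq : (t^2+t^4)/((t^2+1)^2) = t^2/(t^2+1) := by
      rw [div_eq_div_iff (by positivity) (by positivity)]
      ring
    refine h4.congr_deriv (Eq.symm ?_)
    linear_combination Real.exp (-(t^2)/2) * hrat + 2 * Real.exp (-(t^2)/2) * hq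
  have hint : IntegrableOn f' (Ioi x) := by
    apply Integrable.integrableOn
    apply gauss_integrable.mono
    · apply Continuous.aestronglyMeasurable
      apply Continuous.mul (by continuity)
      apply Continuous.div (by continuity) (by continuity)
      intro t; positivity
    · filter_upwards with t
      rw [Real.norm_eq_abs, Real.norm_eq_abs, abs_of_pos (Real.exp_pos _), abs_mul,
        abs_of_pos (Real.exp_pos _)]
      have h5 : |((t^4 + 2*t^2 - 1)/((t^2+1)^2))| ≤ 1 := by
        rw [abs_div, abs_of_pos (by positivity : (0:ℝ) < (t^2+1)^2), div_le_one (by positivity)]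
        rw [abs_le]
        constructor <;> nlinarith [sq_nonneg t, sq_nonneg (t^2)]
      nlinarith [Real.exp_pos (-(t^2)/2), abs_nonneg ((t^4 + 2*t^2 - 1)/((t^2+1)^2))]
  have hlim : Tendsto f atTop (nhds 0) := by
    rw [show (0:ℝ) = -0 by norm_num]
    apply Tendsto.neg
    have hb : Tendsto (fun t : ℝ => Real.exp (-(t^2)/2)) atTop (nhds 0) := by
      apply Real.tendsto_exp_atBot.comp
      have h1 : Tendsto (fun t : ℝ => t^2) atTop atTop :=
        tendsto_pow_atTop (by norm_num)
      have h2 : Tendsto (fun t : ℝ => -(t^2)) atTop atBot := tendsto_neg_atBot_iff.mpr h1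
      exact h2.atBot_div_const (by norm_num)
    apply squeeze_zero' (g := fun t : ℝ => Real.exp (-(t^2)/2))
    · filter_upwards [eventually_ge_atTop (0:ℝ)] with t ht
      positivity
    · filter_upwards [eventually_ge_atTop (0:ℝ)] with t ht
      have : t/(t^2+1) ≤ 1 := by
        rw [div_le_one (by positivity)]; nlinarith [sq_nonneg (t-1)]
      nlinarith [Real.exp_pos (-(t^2)/2), div_nonneg ht (by positivity : (0:ℝ) ≤ t^2+1)]
    · exact hb
  have heq : ∫ t in Ioi x, f' t = 0 - f x :=
    integral_Ioi_of_hasDerivAt_of_tendsto' (fun t _ => hd t) hint hlim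
  have hmono : ∫ t in Ioi x, f' t ≤ ∫ t in Ioi x, Real.exp (-(t^2)/2) := by
    apply setIntegral_mono_on hint gauss_integrable.integrableOn measurableSet_Ioi
    intro t _
    have h5 : (t^4 + 2*t^2 - 1)/((t^2+1)^2) ≤ 1 := by
      rw [div_le_one (by positivity)]; nlinarith
    exact mul_le_of_le_one_right (Real.exp_pos _).le h5
  calc Real.exp (-(x^2)/2) * (x/(x^2+1)) = 0 - f x := by simp [hf]
    _ = ∫ t in Ioi x, f' t := heq.symm
    _ ≤ _ := hmono
lemma key1 {ε : ℝ} (hε : 0 < ε) : ε * Real.exp (1 - 4*ε) ≤ 1/4 := by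
  have h := Real.add_one_le_exp (4*ε - 1)
  have h2 : Real.exp (4*ε - 1) * Real.exp (1 - 4*ε) = 1 := by
    rw [← Real.exp_add, show (4*ε-1)+(1-4*ε) = 0 by ring, Real.exp_zero]
  nlinarith [mul_le_mul_of_nonneg_right h (Real.exp_pos (1-4*ε)).le, Real.exp_pos (1-4*ε)]

lemma key2 {ε : ℝ} (hε : 0 < ε) : ε * Real.exp (3/2 - 9*ε/2) ≤ Real.pi/4 := by
  have h := Real.add_one_le_exp (9*ε/2 - 1)
  have h2 : Real.exp (9*ε/2 - 1) * Real.exp (3/2 - 9*ε/2) = Real.exp (1/2) := by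
    rw [← Real.exp_add, show (9*ε/2-1)+(3/2-9*ε/2) = (1/2 : ℝ) by ring]
  have h3 : Real.exp (1/2) * Real.exp (1/2) = Real.exp 1 := by
    rw [← Real.exp_add]; norm_num
  have h4 : Real.exp (1/2) < 1.649 := by
    nlinarith [Real.exp_one_lt_d9, Real.exp_pos (1/2 : ℝ)]
  nlinarith [mul_le_mul_of_nonneg_right h (Real.exp_pos (3/2-9*ε/2)).le,
    Real.exp_pos (3/2-9*ε/2), Real.pi_gt_d6]

lemma key3 {u : ℝ} : u ≤ Real.exp (u - 1) := by
  have := Real.add_one_le_exp (u - 1); linarith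

lemma master {ε : ℝ} (hε : 0 < ε) (z : ℝ) :
    Real.sqrt (ε / (2 * Real.pi)) * Real.exp ((1 - 4*ε)/2) * Real.exp (-((1+ε) * z^2)/2)
      ≤ stdNormalCDF z := by
  have hπ := Real.pi_pos
  have hsq : ∀ w : ℝ,
      (Real.sqrt (ε/(2*Real.pi)) * Real.exp ((1-4*ε)/2) * Real.exp (-((1+ε)*w^2)/2))^2
      = ε/(2*Real.pi) * (Real.exp (1-4*ε) * Real.exp (-((1+ε)*w^2))) := by
    intro w
    have e1 : Real.exp ((1-4*ε)/2) * Real.exp ((1-4*ε)/2) = Real.exp (1-4*ε) := by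
      rw [← Real.exp_add]; congr 1; ring
    have e2 : Real.exp (-((1+ε)*w^2)/2) * Real.exp (-((1+ε)*w^2)/2)
        = Real.exp (-((1+ε)*w^2)) := by
      rw [← Real.exp_add]; congr 1; ring
    have e3 : Real.sqrt (ε/(2*Real.pi)) * Real.sqrt (ε/(2*Real.pi)) = ε/(2*Real.pi) :=
      Real.mul_self_sqrt (by positivity)
    have e0 : (Real.sqrt (ε/(2*Real.pi)) * Real.exp ((1-4*ε)/2) * Real.exp (-((1+ε)*w^2)/2))^2
        = (Real.sqrt (ε/(2*Real.pi)) * Real.sqrt (ε/(2*Real.pi)))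
          * ((Real.exp ((1-4*ε)/2) * Real.exp ((1-4*ε)/2))
            * (Real.exp (-((1+ε)*w^2)/2) * Real.exp (-((1+ε)*w^2)/2))) := by ring
    rw [e0, e1, e2, e3]
  rcases le_or_gt 0 z with hz | hz
  · -- z ≥ 0 : Φ ≥ 1/2
    have hB : (1:ℝ)/2 ≤ stdNormalCDF z := by
      unfold stdNormalCDF
      have hmono : (∫ t in Iic (0:ℝ), Real.exp (-(t^2)/2)) ≤ ∫ t in Iic z, Real.exp (-(t^2)/2) := by
        apply setIntegral_mono_set gauss_integrable.integrableOn
        · filter_upwards with t; positivity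
        · exact HasSubset.Subset.eventuallyLE (Iic_subset_Iic.mpr hz)
      rw [gauss_Iic_zero] at hmono
      have hs : (0:ℝ) < Real.sqrt (2 * Real.pi) := by positivity
      calc (1:ℝ)/2 = (Real.sqrt (2*Real.pi))⁻¹ * (Real.sqrt (2*Real.pi)/2) := by
            field_simp
        _ ≤ _ := mul_le_mul_of_nonneg_left hmono (by positivity)
    refine le_trans ?_ hB
    apply le_of_pow_le_pow_left₀ two_ne_zero (by norm_num)
    rw [hsq]
    have he : Real.exp (-((1+ε)*z^2)) ≤ 1 := Real.exp_le_one_iff.mpr (by nlinarith [sq_nonneg z])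
    have hk := key1 hε
    have hp : (0:ℝ) < 2*Real.pi := by linarith
    rw [div_mul_eq_mul_div, div_le_iff₀ hp]
    calc ε * (Real.exp (1-4*ε) * Real.exp (-((1+ε)*z^2)))
        ≤ ε * (Real.exp (1-4*ε) * 1) := by
          apply mul_le_mul_of_nonneg_left _ hε.le
          exact mul_le_mul_of_nonneg_left he (Real.exp_pos _).le
      _ = ε * Real.exp (1-4*ε) := by ring
      _ ≤ 1/4 := hk
      _ ≤ (1/2)^2 * (2*Real.pi) := by nlinarith [Real.pi_gt_three]
  · rcases le_or_gt (z^2) (1/2) with hz2 | hz2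
    · -- |z| small
      have hB := gauss_Iic_lower z
      have hB' : (Real.sqrt (2*Real.pi))⁻¹ * (Real.sqrt Real.pi/2 * Real.exp (-z^2))
          ≤ stdNormalCDF z := by
        unfold stdNormalCDF
        exact mul_le_mul_of_nonneg_left hB (by positivity)
      refine le_trans ?_ hB'
      apply le_of_pow_le_pow_left₀ two_ne_zero (by positivity)
      rw [hsq]
      have hBsq : ((Real.sqrt (2*Real.pi))⁻¹ * (Real.sqrt Real.pi/2 * Real.exp (-z^2)))^2
          = (2*Real.pi)⁻¹ * (Real.pi/4 * Real.exp (-(2*z^2))) := by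
        have e3 : Real.sqrt (2*Real.pi) * Real.sqrt (2*Real.pi) = 2*Real.pi :=
          Real.mul_self_sqrt (by positivity)
        have e4 : Real.sqrt Real.pi * Real.sqrt Real.pi = Real.pi :=
          Real.mul_self_sqrt (by positivity)
        have e5 : Real.exp (-z^2) * Real.exp (-z^2) = Real.exp (-(2*z^2)) := by
          rw [← Real.exp_add]; congr 1; ring
        have e0 : ((Real.sqrt (2*Real.pi))⁻¹ * (Real.sqrt Real.pi/2 * Real.exp (-z^2)))^2
            = (Real.sqrt (2*Real.pi) * Real.sqrt (2*Real.pi))⁻¹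
              * ((Real.sqrt Real.pi * Real.sqrt Real.pi)/4 * (Real.exp (-z^2) * Real.exp (-z^2))) := by
          ring
        rw [e0, e3, e4, e5]
      rw [hBsq]
      have hgoal : ε * (Real.exp (1-4*ε) * Real.exp (-((1+ε)*z^2)))
          ≤ Real.pi/4 * Real.exp (-(2*z^2)) := by
        rcases le_or_gt 1 ε with hε1 | hε1
        · have he : Real.exp (-((1+ε)*z^2)) ≤ Real.exp (-(2*z^2)) := by
            apply Real.exp_le_exp.mpr; nlinarith [sq_nonneg z]
          calc ε * (Real.exp (1-4*ε) * Real.exp (-((1+ε)*z^2)))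
              ≤ ε * (Real.exp (1-4*ε) * Real.exp (-(2*z^2))) := by
                apply mul_le_mul_of_nonneg_left _ hε.le
                exact mul_le_mul_of_nonneg_left he (Real.exp_pos _).le
            _ = (ε * Real.exp (1-4*ε)) * Real.exp (-(2*z^2)) := by ring
            _ ≤ (1/4) * Real.exp (-(2*z^2)) := by
                apply mul_le_mul_of_nonneg_right (key1 hε) (Real.exp_pos _).le
            _ ≤ Real.pi/4 * Real.exp (-(2*z^2)) := by
                apply mul_le_mul_of_nonneg_right _ (Real.exp_pos _).le
                nlinarith [Real.pi_gt_three]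
        · have hsplit : Real.exp (1-4*ε) * Real.exp (-((1+ε)*z^2))
              = Real.exp (-(2*z^2)) * Real.exp (1-4*ε + (1-ε)*z^2) := by
            rw [← Real.exp_add, ← Real.exp_add]; congr 1; ring
          have he : Real.exp (1-4*ε + (1-ε)*z^2) ≤ Real.exp (3/2 - 9*ε/2) := by
            apply Real.exp_le_exp.mpr
            nlinarith [sq_nonneg z]
          calc ε * (Real.exp (1-4*ε) * Real.exp (-((1+ε)*z^2)))
              = Real.exp (-(2*z^2)) * (ε * Real.exp (1-4*ε + (1-ε)*z^2)) := by
                rw [hsplit]; ring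
            _ ≤ Real.exp (-(2*z^2)) * (ε * Real.exp (3/2 - 9*ε/2)) := by
                apply mul_le_mul_of_nonneg_left _ (Real.exp_pos _).le
                exact mul_le_mul_of_nonneg_left he hε.le
            _ ≤ Real.exp (-(2*z^2)) * (Real.pi/4) := by
                apply mul_le_mul_of_nonneg_left (key2 hε) (Real.exp_pos _).le
            _ = Real.pi/4 * Real.exp (-(2*z^2)) := by ring
      calc ε/(2*Real.pi) * (Real.exp (1-4*ε) * Real.exp (-((1+ε)*z^2)))
          = (2*Real.pi)⁻¹ * (ε * (Real.exp (1-4*ε) * Real.exp (-((1+ε)*z^2)))) := by ring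
        _ ≤ (2*Real.pi)⁻¹ * (Real.pi/4 * Real.exp (-(2*z^2))) := by
            apply mul_le_mul_of_nonneg_left hgoal (by positivity)
    · -- z ≤ -1/√2 : Mills
      set x := -z with hxdef
      have hx : 0 < x := by simp [hxdef]; linarith
      have hx2 : 1/2 < x^2 := by simp only [hxdef, neg_sq]; exact hz2
      have hzx : z^2 = x^2 := by simp [hxdef]
      have hB : (Real.sqrt (2*Real.pi))⁻¹ * (Real.exp (-(x^2)/2) * (x/(x^2+1)))
          ≤ stdNormalCDF z := by
        unfold stdNormalCDF
        rw [gauss_Iic_eq_Ioi]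
        exact mul_le_mul_of_nonneg_left (mills x hx.le) (by positivity)
      refine le_trans ?_ hB
      apply le_of_pow_le_pow_left₀ two_ne_zero (by positivity)
      rw [hsq]
      have hBsq : ((Real.sqrt (2*Real.pi))⁻¹ * (Real.exp (-(x^2)/2) * (x/(x^2+1))))^2
          = (2*Real.pi)⁻¹ * (Real.exp (-x^2) * (x^2/(x^2+1)^2)) := by
        have e3 : Real.sqrt (2*Real.pi) * Real.sqrt (2*Real.pi) = 2*Real.pi :=
          Real.mul_self_sqrt (by positivity)
        have e5 : Real.exp (-(x^2)/2) * Real.exp (-(x^2)/2) = Real.exp (-x^2) := by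
          rw [← Real.exp_add]; congr 1; ring
        have e0 : ((Real.sqrt (2*Real.pi))⁻¹ * (Real.exp (-(x^2)/2) * (x/(x^2+1))))^2
            = (Real.sqrt (2*Real.pi) * Real.sqrt (2*Real.pi))⁻¹
              * ((Real.exp (-(x^2)/2) * Real.exp (-(x^2)/2)) * (x/(x^2+1))^2) := by
          ring
        rw [e0, e3, e5, div_pow]
      rw [hBsq, hzx]
      have hkey3 : ε*(x^2+4) ≤ Real.exp (ε*(x^2+4) - 1) := key3
      have hpoly : (x^2+1)^2 ≤ x^2*(x^2+4) := by nlinarith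
      have hexp : Real.exp (ε*(x^2+4)-1) * (Real.exp (1-4*ε) * Real.exp (-((1+ε)*x^2)))
          = Real.exp (-x^2) := by
        rw [← Real.exp_add, ← Real.exp_add]; congr 1; ring
      set E := Real.exp (1-4*ε) * Real.exp (-((1+ε)*x^2)) with hE
      have hEpos : 0 < E := by positivity
      have hd2 : (0:ℝ) < (x^2+1)^2 := by positivity
      have main : ε * E * (x^2+1)^2 ≤ Real.exp (-x^2) * x^2 := by
        calc ε * E * (x^2+1)^2 ≤ ε * E * (x^2*(x^2+4)) := by
              apply mul_le_mul_of_nonneg_left hpoly (by positivity)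
          _ = (ε*(x^2+4)) * E * x^2 := by ring
          _ ≤ Real.exp (ε*(x^2+4) - 1) * E * x^2 :=
              mul_le_mul_of_nonneg_right
                (mul_le_mul_of_nonneg_right hkey3 hEpos.le) (sq_nonneg x)
          _ = Real.exp (-x^2) * x^2 := by rw [← hexp]; try ring
      calc ε/(2*Real.pi) * E = (2*Real.pi)⁻¹ * (ε * E) := by ring
        _ ≤ (2*Real.pi)⁻¹ * (Real.exp (-x^2) * (x^2/(x^2+1)^2)) := by
            apply mul_le_mul_of_nonneg_left _ (by positivity)
            rw [show Real.exp (-x^2) * (x^2/(x^2+1)^2)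
                = Real.exp (-x^2) * x^2/(x^2+1)^2 by ring, le_div_iff₀ hd2]
            exact main

lemma pointwise (a : ℝ) (ha : -4 < a) (z : ℝ) :
    1 / stdNormalCDF z ≤ Real.sqrt (2*Real.pi*(a+4)) * Real.exp (-(a/(2*(a+4))))
      * Real.exp ((a+5)/(2*(a+4)) * z^2) := by
  have ha4 : (0:ℝ) < a + 4 := by linarith
  have hπ := Real.pi_pos
  set ε := 1/(a+4) with hεdef
  have hε : 0 < ε := by positivity
  have hm := master hε z
  have hΦ := phi_pos z
  have hid1 : Real.sqrt (2*Real.pi*(a+4)) * Real.sqrt (ε/(2*Real.pi)) = 1 := by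
    rw [← Real.sqrt_mul (by positivity),
      show (2*Real.pi*(a+4)) * (ε/(2*Real.pi)) = 1 by rw [hεdef]; field_simp]
    exact Real.sqrt_one
  have hid2 : Real.exp (-(a/(2*(a+4)))) * Real.exp ((1-4*ε)/2) = 1 := by
    rw [← Real.exp_add,
      show -(a/(2*(a+4))) + (1-4*ε)/2 = 0 by rw [hεdef]; field_simp; ring,
      Real.exp_zero]
  have hid3 : Real.exp ((a+5)/(2*(a+4)) * z^2) * Real.exp (-((1+ε)*z^2)/2) = 1 := by
    rw [← Real.exp_add,
      show (a+5)/(2*(a+4)) * z^2 + -((1+ε)*z^2)/2 = 0 by rw [hεdef]; field_simp; ring,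
      Real.exp_zero]
  rw [div_le_iff₀ hΦ]
  have hprod : (Real.sqrt (2*Real.pi*(a+4)) * Real.exp (-(a/(2*(a+4))))
      * Real.exp ((a+5)/(2*(a+4)) * z^2))
      * (Real.sqrt (ε/(2*Real.pi)) * Real.exp ((1-4*ε)/2) * Real.exp (-((1+ε)*z^2)/2)) = 1 := by
    rw [show (Real.sqrt (2*Real.pi*(a+4)) * Real.exp (-(a/(2*(a+4))))
        * Real.exp ((a+5)/(2*(a+4)) * z^2))
        * (Real.sqrt (ε/(2*Real.pi)) * Real.exp ((1-4*ε)/2) * Real.exp (-((1+ε)*z^2)/2))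
        = (Real.sqrt (2*Real.pi*(a+4)) * Real.sqrt (ε/(2*Real.pi)))
          * ((Real.exp (-(a/(2*(a+4)))) * Real.exp ((1-4*ε)/2))
            * (Real.exp ((a+5)/(2*(a+4)) * z^2) * Real.exp (-((1+ε)*z^2)/2))) by ring,
      hid1, hid2, hid3]
    norm_num
  calc (1:ℝ) = (Real.sqrt (2*Real.pi*(a+4)) * Real.exp (-(a/(2*(a+4))))
        * Real.exp ((a+5)/(2*(a+4)) * z^2))
        * (Real.sqrt (ε/(2*Real.pi)) * Real.exp ((1-4*ε)/2) * Real.exp (-((1+ε)*z^2)/2)) :=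
        hprod.symm
    _ ≤ (Real.sqrt (2*Real.pi*(a+4)) * Real.exp (-(a/(2*(a+4))))
        * Real.exp ((a+5)/(2*(a+4)) * z^2)) * stdNormalCDF z := by
        apply mul_le_mul_of_nonneg_left hm (by positivity)

/-- If `z` is a real random variable, `a > -4` and
`log E[exp((a+5)/(2(a+4))·z²)] ≤ M` (the expectation being finite), then `E[1/Φ(z)]`
is finite and `log E[1/Φ(z)] ≤ (1/2)log(2π(a+4)) − a/(2(a+4)) + M`. -/
theorem stmt_5 {Ω : Type*} [MeasurableSpace Ω] (μ : Measure Ω) [IsProbabilityMeasure μ]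
    (z : Ω → ℝ) (hz : Measurable z) (a M : ℝ) (ha : -4 < a)
    (hint : Integrable (fun ω => Real.exp ((a + 5) / (2 * (a + 4)) * z ω ^ 2)) μ)
    (hM : Real.log (∫ ω, Real.exp ((a + 5) / (2 * (a + 4)) * z ω ^ 2) ∂μ) ≤ M) :
    Integrable (fun ω => 1 / stdNormalCDF (z ω)) μ ∧
      Real.log (∫ ω, 1 / stdNormalCDF (z ω) ∂μ)
        ≤ (1 / 2) * Real.log (2 * Real.pi * (a + 4)) - a / (2 * (a + 4)) + M := by
  have ha4 : (0:ℝ) < a + 4 := by linarith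
  have hπ := Real.pi_pos
  set C := Real.sqrt (2*Real.pi*(a+4)) * Real.exp (-(a/(2*(a+4)))) with hCdef
  have hCpos : 0 < C := by rw [hCdef]; positivity
  have hpt : ∀ ω, 1 / stdNormalCDF (z ω) ≤ C * Real.exp ((a+5)/(2*(a+4)) * z ω^2) := by
    intro ω
    have h := pointwise a ha (z ω)
    rw [← hCdef] at h
    exact h
  have hmeas : AEStronglyMeasurable (fun ω => 1 / stdNormalCDF (z ω)) μ := by
    have hm : Measurable fun ω => 1 / stdNormalCDF (z ω) := by
      simp only [one_div]
      exact ((phi_monotone.measurable).comp hz).inv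
    exact hm.aestronglyMeasurable
  have hIntC : Integrable (fun ω => C * Real.exp ((a+5)/(2*(a+4)) * z ω^2)) μ :=
    hint.const_mul C
  have hInt : Integrable (fun ω => 1 / stdNormalCDF (z ω)) μ := by
    apply Integrable.mono' hIntC hmeas
    filter_upwards with ω
    rw [Real.norm_eq_abs, abs_of_pos (one_div_pos.mpr (phi_pos _))]
    exact hpt ω
  refine ⟨hInt, ?_⟩
  have hone : (1:ℝ) ≤ ∫ ω, 1 / stdNormalCDF (z ω) ∂μ := by
    have h2 : (∫ _ω, (1:ℝ) ∂μ) ≤ ∫ ω, 1 / stdNormalCDF (z ω) ∂μ := by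
      apply integral_mono (integrable_const 1) hInt
      intro ω
      have hp := phi_pos (z ω)
      have hl := phi_le_one (z ω)
      rw [le_div_iff₀ hp]
      show (1:ℝ) * stdNormalCDF (z ω) ≤ 1
      linarith
    simpa using h2
  have hle : (∫ ω, 1 / stdNormalCDF (z ω) ∂μ)
      ≤ C * ∫ ω, Real.exp ((a+5)/(2*(a+4)) * z ω^2) ∂μ := by
    rw [← integral_const_mul]
    exact integral_mono hInt hIntC hpt
  have hIpos : (0:ℝ) < ∫ ω, Real.exp ((a+5)/(2*(a+4)) * z ω^2) ∂μ := by
    have h2 : (∫ _ω, (1:ℝ) ∂μ) ≤ ∫ ω, Real.exp ((a+5)/(2*(a+4)) * z ω^2) ∂μ := by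
      apply integral_mono (integrable_const 1) hint
      intro ω
      rw [show (1:ℝ) = Real.exp 0 by simp]
      apply Real.exp_le_exp.mpr
      apply mul_nonneg (div_nonneg (by linarith) (by linarith)) (sq_nonneg _)
    have h3 : (∫ _ω, (1:ℝ) ∂μ) = 1 := by simp
    linarith
  calc Real.log (∫ ω, 1 / stdNormalCDF (z ω) ∂μ)
      ≤ Real.log (C * ∫ ω, Real.exp ((a+5)/(2*(a+4)) * z ω^2) ∂μ) :=
        Real.log_le_log (by linarith) hle
    _ = Real.log C + Real.log (∫ ω, Real.exp ((a+5)/(2*(a+4)) * z ω^2) ∂μ) :=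
        Real.log_mul (ne_of_gt hCpos) (ne_of_gt hIpos)
    _ ≤ Real.log C + M := by linarith
    _ = (1/2) * Real.log (2*Real.pi*(a+4)) - a/(2*(a+4)) + M := by
        rw [hCdef, Real.log_mul (by positivity) (Real.exp_ne_zero _),
          Real.log_sqrt (by positivity), Real.log_exp]
        ring
end
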